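/- For g(x) = 1 − e^{−x} and any fixed x > 0, the limit α(x) = lim_{n→∞} ( −(1/3)log n + 2/g^{[n]}(x) − n ) exists (in ℝ). -/

import Mathlib

open Filter Topology

lemma g_approx {y : ℝ} (h0 : 0 ≤ y) (h1 : y ≤ 1) :
    |(1 - Real.exp (-y)) - (y - y^2/2 + y^3/6)| ≤ y^4 := by
  have hb := Real.exp_bound (x := -y) (by rw [abs_neg, abs_of_nonneg h0]; exact h1)
    (n := 4) (by norm_num)
  have hs : ∑ m ∈ Finset.range 4, (-y) ^ m / m.factorial = 1 - y + y^2/2 - y^3/6 := by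
    simp [Finset.sum_range_succ, Nat.factorial]
    ring
  rw [hs, abs_neg, abs_of_nonneg h0] at hb
  have h4 : y ^ 4 * ((4:ℕ).succ / ((4:ℕ).factorial * (4:ℕ)) : ℝ) ≤ y ^ 4 := by
    have : ((4:ℕ).succ / ((4:ℕ).factorial * (4:ℕ)) : ℝ) = 5/96 := by norm_num [Nat.factorial]
    rw [this]; nlinarith [pow_nonneg h0 4]
  calc |(1 - Real.exp (-y)) - (y - y^2/2 + y^3/6)|
      = |Real.exp (-y) - (1 - y + y^2/2 - y^3/6)| := by rw [abs_sub_comm]; ring_nf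
    _ ≤ y ^ 4 * ((4:ℕ).succ / ((4:ℕ).factorial * (4:ℕ))) := hb
    _ ≤ y^4 := h4

lemma g_bounds {y : ℝ} (h0 : 0 < y) (h1 : y ≤ 1/100) :
    y/2 ≤ 1 - Real.exp (-y) ∧ 1 - Real.exp (-y) ≤ y := by
  have h := abs_le.mp (g_approx h0.le (by linarith))
  constructor <;> nlinarith [pow_pos h0 2, pow_pos h0 3, pow_pos h0 4, sq_nonneg y]

lemma key_est {y : ℝ} (h0 : 0 < y) (h1 : y ≤ 1/100) :
    |2/(1 - Real.exp (-y)) - 2/y - 1 - y/6| ≤ 5 * y^2 := by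
  set G := 1 - Real.exp (-y) with hGdef
  obtain ⟨hG1, hG2⟩ := g_bounds h0 h1
  have hGpos : 0 < G := lt_of_lt_of_le (by positivity) hG1
  have hP := abs_le.mp (g_approx h0.le (by linarith))
  have hid : 2/G - 2/y - 1 - y/6 = (12*y - (12 + 6*y + y^2) * G) / (6*y*G) := by
    field_simp
    ring
  have hN : |12*y - (12 + 6*y + y^2) * G| ≤ 14 * y^4 := by
    rw [abs_le]
    constructor <;> nlinarith [pow_pos h0 2, pow_pos h0 3, pow_pos h0 4, pow_pos h0 5]
  rw [hid, abs_div, abs_of_pos (by positivity : (0:ℝ) < 6*y*G)]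
  have hden : 3 * y^2 ≤ 6*y*G := by nlinarith
  calc |12*y - (12 + 6*y + y^2) * G| / (6*y*G)
      ≤ (14 * y^4) / (3 * y^2) := by
        exact div_le_div₀ (by positivity) hN (by positivity) hden
    _ ≤ 5 * y^2 := by rw [div_le_iff₀ (by positivity)]; nlinarith [pow_pos h0 2, pow_pos h0 4]

-- log difference bounds
lemma hlog_lb (k : ℕ) (hk : 1 ≤ k) :
    1/((k:ℝ)+1) ≤ Real.log ((k:ℝ)+1) - Real.log k := by
  have hk0 : (0:ℝ) < k := by exact_mod_cast hk
  have h := Real.log_le_sub_one_of_pos (x := (k:ℝ)/((k:ℝ)+1)) (by positivity)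
  rw [Real.log_div (ne_of_gt hk0) (by positivity)] at h
  have h2 : (k:ℝ)/((k:ℝ)+1) - 1 = -(1/((k:ℝ)+1)) := by field_simp; ring
  linarith

lemma hlog_ub (k : ℕ) (hk : 1 ≤ k) :
    Real.log ((k:ℝ)+1) - Real.log k ≤ 1/(k:ℝ) := by
  have hk0 : (0:ℝ) < k := by exact_mod_cast hk
  have h := Real.log_le_sub_one_of_pos (x := ((k:ℝ)+1)/k) (by positivity)
  rw [Real.log_div (by positivity) (ne_of_gt hk0)] at h
  have h2 : ((k:ℝ)+1)/(k:ℝ) - 1 = 1/(k:ℝ) := by field_simp; ring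
  linarith

lemma log_le_two_sqrt {t : ℝ} (ht : 0 < t) : Real.log t ≤ 2 * Real.sqrt t := by
  have h := Real.log_le_sub_one_of_pos (Real.sqrt_pos.mpr ht)
  rw [Real.log_sqrt ht.le] at h
  nlinarith [Real.sqrt_nonneg t]

lemma rpow_32 (n : ℕ) : (n:ℝ) ^ (3/2 : ℝ) = n * Real.sqrt n := by
  rcases Nat.eq_zero_or_pos n with h | h
  · simp [h, Real.zero_rpow (by norm_num : (3:ℝ)/2 ≠ 0)]
  · have hn : (0:ℝ) < n := by exact_mod_cast h
    rw [show (3/2:ℝ) = 1 + 1/2 by norm_num, Real.rpow_add hn, Real.rpow_one,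
      Real.sqrt_eq_rpow]

set_option maxHeartbeats 1000000 in
lemma main_small (x : ℝ) (hx0 : 0 < x) (hx1 : x ≤ 1/100) :
    ∃ L : ℝ, Tendsto (fun n : ℕ =>
        -(1/3) * Real.log n + 2 / (fun y : ℝ => 1 - Real.exp (-y))^[n] x - n) atTop
      (𝓝 L) := by
  set g : ℝ → ℝ := fun y : ℝ => 1 - Real.exp (-y) with hg
  set a : ℕ → ℝ := fun n => g^[n] x with ha
  set u : ℕ → ℝ := fun n => -(1/3) * Real.log n + 2 / a n - n with hu
  have hastep : ∀ n, a (n+1) = 1 - Real.exp (-(a n)) := by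
    intro n
    simp only [ha, Function.iterate_succ_apply', hg]
  -- positivity and smallness
  have hbasic : ∀ n, 0 < a n ∧ a n ≤ 1/100 := by
    intro n
    induction n with
    | zero => exact ⟨hx0, hx1⟩
    | succ k ih =>
      obtain ⟨h1, h2⟩ := ih
      obtain ⟨hl, hr⟩ := g_bounds h1 h2
      rw [hastep k]
      constructor
      · linarith
      · linarith
  have hapos : ∀ n, 0 < a n := fun n => (hbasic n).1
  have hasmall : ∀ n, a n ≤ 1/100 := fun n => (hbasic n).2
  have hD : ∀ n, |2/a (n+1) - 2/a n - 1 - a n/6| ≤ 5 * (a n)^2 := by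
    intro n
    rw [hastep n]
    exact key_est (hapos n) (hasmall n)
  have hDlo : ∀ n, 2/a n + 1 ≤ 2/a (n+1) := by
    intro n
    have h := (abs_le.mp (hD n)).1
    nlinarith [hapos n, hasmall n]
  have hDhi : ∀ n, 2/a (n+1) ≤ 2/a n + 1 + a n := by
    intro n
    have h := (abs_le.mp (hD n)).2
    nlinarith [hapos n, hasmall n]
  have hx200 : (200:ℝ) ≤ 2/x := by
    rw [le_div_iff₀ hx0]; linarith
  have hlow : ∀ n : ℕ, 2/x + n ≤ 2/a n := by
    intro n
    induction n with
    | zero => simp [ha]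
    | succ k ih =>
      have := hDlo k
      push_cast
      linarith
  have hainv : ∀ n : ℕ, (n:ℝ) + 1 ≤ 2/a n := fun n => by linarith [hlow n]
  have haup : ∀ n : ℕ, a n ≤ 2/((n:ℝ)+1) := by
    intro n
    rw [le_div_iff₀ (by positivity)]
    have h := hainv n
    rw [le_div_iff₀ (hapos n)] at h
    linarith
  -- upper bound on 2/a n
  have hup : ∀ n : ℕ, 1 ≤ n → 2/a n ≤ 2/x + n + 1 + 2 * Real.log n := by
    intro n hn
    induction n, hn using Nat.le_induction with
    | base =>
      have h := hDhi 0
      have h0 : a 0 = x := rfl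
      have : Real.log ((1:ℕ):ℝ) = 0 := by norm_num
      rw [this]
      rw [h0] at h
      push_cast
      linarith
    | succ k hk ih =>
      have h := hDhi k
      have h2 := haup k
      have h2' : a k ≤ 2 * (1/((k:ℝ)+1)) := by rw [mul_one_div]; exact h2
      have h3 := hlog_lb k hk
      push_cast
      push_cast at ih
      linarith
  -- |a n - 2/n| bound
  have hadiff : ∀ n : ℕ, 1 ≤ n → |a n - 2/(n:ℝ)| ≤ 2*(2/x + 1 + 2*Real.log n)/(n:ℝ)^2 := by
    intro n hn
    have hn0 : (1:ℝ) ≤ (n:ℝ) := by exact_mod_cast hn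
    have hnpos : (0:ℝ) < n := by linarith
    set B := 2 / a n with hB
    have hBlo : (n:ℝ) + 200 ≤ B := by have := hlow n; linarith
    have hBpos : 0 < B := by linarith
    have hBup : B ≤ (n:ℝ) + (2/x + 1 + 2*Real.log n) := by
      have := hup n hn; linarith
    have hc : a n = 2 / B := by
      rw [hB]
      field_simp
    have hKpos : 0 ≤ 2/x + 1 + 2*Real.log n := by
      have : 0 ≤ Real.log n := Real.log_nonneg hn0
      positivity
    rw [hc, abs_of_nonpos (by
      rw [sub_nonpos]
      apply div_le_div_of_nonneg_left (by norm_num) hnpos (by linarith))]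
    have hid : -(2/B - 2/(n:ℝ)) = 2*(B - (n:ℝ))/((n:ℝ)*B) := by
      field_simp
      ring
    rw [hid]
    apply div_le_div₀ (by positivity) (by linarith) (by positivity)
    nlinarith
  -- difference bound on u
  have hudiff : ∀ n : ℕ, 1 ≤ n →
      |u (n+1) - u n| ≤ (23 + 2/x) / ((n:ℝ) * Real.sqrt n) := by
    intro n hn
    have hn1 : (1:ℝ) ≤ (n:ℝ) := by exact_mod_cast hn
    have hnpos : (0:ℝ) < n := by linarith
    have hsq : Real.sqrt n * Real.sqrt n = (n:ℝ) := Real.mul_self_sqrt (by positivity)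
    have hsq1 : 1 ≤ Real.sqrt n := by nlinarith [Real.sqrt_nonneg (n:ℝ)]
    have hid : u (n+1) - u n =
        (2/a (n+1) - 2/a n - 1 - a n/6) + (a n - 2/(n:ℝ))/6 +
        ((1/(3*(n:ℝ))) - (1/3) * (Real.log ((n:ℝ)+1) - Real.log n)) := by
      simp only [hu]
      push_cast
      ring
    have han : a n * (n:ℝ) ≤ 2 := by
      have h := haup n
      rw [le_div_iff₀ (by positivity)] at h
      nlinarith [hapos n]
    have hT1 : |2/a (n+1) - 2/a n - 1 - a n/6| ≤ 20/(n:ℝ)^2 := by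
      refine (hD n).trans ?_
      rw [le_div_iff₀ (by positivity)]
      nlinarith [hapos n, mul_pos (hapos n) hnpos]
    have hT2 : |(a n - 2/(n:ℝ))/6| ≤ (2/x + 1 + 2*Real.log n)/(3*(n:ℝ)^2) := by
      rw [abs_div, abs_of_nonneg (by norm_num : (0:ℝ) ≤ 6)]
      have h := hadiff n hn
      have heq : 2*(2/x + 1 + 2*Real.log n)/(n:ℝ)^2/6 = (2/x + 1 + 2*Real.log n)/(3*(n:ℝ)^2) := by
        field_simp
        ring
      have h6 : |a n - 2/(n:ℝ)|/6 ≤ 2*(2/x + 1 + 2*Real.log n)/(n:ℝ)^2/6 := by linarith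
      linarith [heq ▸ h6]
    have hT3 : |(1/(3*(n:ℝ))) - (1/3) * (Real.log ((n:ℝ)+1) - Real.log n)| ≤ 1/(3*(n:ℝ)^2) := by
      have h1 := hlog_lb n hn
      have h2 := hlog_ub n hn
      have hea : 1/(3*(n:ℝ)) = (1/3)*(1/(n:ℝ)) := by field_simp
      have heb : 1/(3*(n:ℝ)^2) = (1/3)*(1/(n:ℝ)^2) := by field_simp
      have h3 : 1/(n:ℝ) - 1/(n:ℝ)^2 ≤ 1/((n:ℝ)+1) := by
        rw [div_sub_div _ _ (by positivity) (by positivity), div_le_div_iff₀ (by positivity) (by positivity)]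
        nlinarith
      have hc : 0 ≤ 1/(n:ℝ)^2 := by positivity
      rw [abs_le]
      constructor <;> linarith
    have hlogn : Real.log n ≤ 2 * Real.sqrt n := log_le_two_sqrt hnpos
    have hsqn : Real.sqrt n ≤ (n:ℝ) := by nlinarith
    have hx0' : (0:ℝ) ≤ 2/x := by positivity
    have hlog0 : 0 ≤ Real.log n := Real.log_nonneg hn1
    have htot : |u (n+1) - u n| ≤ 20/(n:ℝ)^2 + (2/x + 1 + 2*Real.log n)/(3*(n:ℝ)^2) + 1/(3*(n:ℝ)^2) := by
      rw [hid]
      calc |2/a (n+1) - 2/a n - 1 - a n/6 + (a n - 2/(n:ℝ))/6 +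
          ((1/(3*(n:ℝ))) - (1/3) * (Real.log ((n:ℝ)+1) - Real.log n))|
          ≤ |2/a (n+1) - 2/a n - 1 - a n/6 + (a n - 2/(n:ℝ))/6| +
            |(1/(3*(n:ℝ))) - (1/3) * (Real.log ((n:ℝ)+1) - Real.log n)| := abs_add_le _ _
        _ ≤ |2/a (n+1) - 2/a n - 1 - a n/6| + |(a n - 2/(n:ℝ))/6| +
            |(1/(3*(n:ℝ))) - (1/3) * (Real.log ((n:ℝ)+1) - Real.log n)| := by
              linarith [abs_add_le (2/a (n+1) - 2/a n - 1 - a n/6) ((a n - 2/(n:ℝ))/6)]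
        _ ≤ _ := by linarith
    refine htot.trans ?_
    have heqS : 20/(n:ℝ)^2 + (2/x + 1 + 2*Real.log n)/(3*(n:ℝ)^2) + 1/(3*(n:ℝ)^2)
        = (62 + 2/x + 2*Real.log n)/(3*(n:ℝ)^2) := by
      field_simp
      ring
    rw [heqS, div_le_div_iff₀ (by positivity) (by positivity)]
    have hkey : Real.log n * ((n:ℝ) * Real.sqrt n) ≤ 2*Real.sqrt n * ((n:ℝ)*Real.sqrt n) :=
      mul_le_mul_of_nonneg_right hlogn (by positivity)
    have hns : (n:ℝ) * Real.sqrt n ≤ (n:ℝ)^2 := by nlinarith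
    have hxns : (2/x) * ((n:ℝ) * Real.sqrt n) ≤ (2/x) * (n:ℝ)^2 :=
      mul_le_mul_of_nonneg_left hns hx0'
    nlinarith [sq_nonneg ((n:ℝ) - Real.sqrt n)]
  -- summability
  set M : ℝ := 23 + 2/x with hM
  have hM0 : 0 ≤ M := by positivity
  have hsum0 : Summable (fun n : ℕ => M * (1 / ((n:ℝ) * Real.sqrt n))) := by
    have h := (Real.summable_one_div_nat_rpow (p := 3/2)).mpr (by norm_num)
    exact (h.mul_left M).congr fun n => by rw [rpow_32 n]
  have hsumshift : Summable (fun n : ℕ => M * (1 / ((((n+1):ℕ):ℝ) * Real.sqrt ((n+1):ℕ)))) :=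
    (summable_nat_add_iff 1).mpr hsum0
  have hsumdist : Summable (fun n : ℕ => dist (u n) (u (n+1))) := by
    rw [← summable_nat_add_iff 1]
    refine Summable.of_nonneg_of_le (fun n => dist_nonneg) (fun n => ?_) hsumshift
    rw [Real.dist_eq, abs_sub_comm, mul_one_div]
    exact hudiff (n+1) (Nat.le_add_left 1 n)
  obtain ⟨L, hL⟩ := cauchySeq_tendsto_of_complete (cauchySeq_of_summable_dist hsumdist)
  exact ⟨L, hL⟩

/-- Fatou/Walker's limit: for `g x = 1 - exp (-x)` and any `x > 0`, the limit
`α(x) = lim_{n→∞} ( -(1/3) log n + 2 / g^[n](x) - n )` exists in `ℝ`. -/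
theorem fatou_walker_limit_exists :
    ∀ x : ℝ, 0 < x → ∃ L : ℝ,
      Tendsto (fun n : ℕ =>
          -(1/3) * Real.log n + 2 / (fun y : ℝ => 1 - Real.exp (-y))^[n] x - n) atTop
        (𝓝 L) := by
  intro x hx
  set g : ℝ → ℝ := fun y : ℝ => 1 - Real.exp (-y) with hg
  have hgpos : ∀ y : ℝ, 0 < y → 0 < g y := by
    intro y hy
    have : Real.exp (-y) < 1 := by
      rw [Real.exp_lt_one_iff]; linarith
    simp only [hg]; linarith
  have hglt : ∀ y : ℝ, 0 < y → g y < y := by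
    intro y hy
    have h := Real.add_one_lt_exp (x := -y) (by linarith)
    simp only [hg]; linarith
  have hapos : ∀ n : ℕ, 0 < g^[n] x := by
    intro n
    induction n with
    | zero => exact hx
    | succ k ih => rw [Function.iterate_succ_apply']; exact hgpos _ ih
  -- the iterates tend to 0
  have hanti : Antitone (fun n : ℕ => g^[n] x) := by
    apply antitone_nat_of_succ_le
    intro n
    rw [Function.iterate_succ_apply']
    exact (hglt _ (hapos n)).le
  have hbdd : BddBelow (Set.range (fun n : ℕ => g^[n] x)) :=
    ⟨0, fun z ⟨n, hn⟩ => hn ▸ (hapos n).le⟩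
  have htend := tendsto_atTop_ciInf hanti hbdd
  set l : ℝ := ⨅ n : ℕ, g^[n] x with hl
  have hl0 : 0 ≤ l := le_ciInf fun n => (hapos n).le
  have hgl : g l = l := by
    have h1 : Tendsto (fun n : ℕ => g^[n+1] x) atTop (𝓝 l) :=
      (tendsto_add_atTop_iff_nat 1).mpr htend
    have h2 : Tendsto (fun n : ℕ => g (g^[n] x)) atTop (𝓝 (g l)) := by
      have hcont : Continuous g := by
        simp only [hg]; continuity
      exact (hcont.tendsto l).comp htend
    have : (fun n : ℕ => g^[n+1] x) = fun n : ℕ => g (g^[n] x) := by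
      funext n; rw [Function.iterate_succ_apply']
    rw [this] at h1
    exact tendsto_nhds_unique h2 h1
  have hl00 : l = 0 := by
    by_contra h
    have hlpos : 0 < l := lt_of_le_of_ne hl0 (Ne.symm h)
    exact absurd hgl (ne_of_lt (hglt l hlpos))
  rw [hl00] at htend
  -- find N with iterate small
  have hev : ∀ᶠ n : ℕ in atTop, g^[n] x < 1/100 :=
    htend.eventually_lt_const (by norm_num : (0:ℝ) < 1/100)
  obtain ⟨N, hN⟩ := hev.exists
  obtain ⟨L', hL'⟩ := main_small (g^[N] x) (hapos N) hN.le
  have hlogt : Tendsto (fun n : ℕ => Real.log ((n:ℝ) + (N:ℝ)) - Real.log n) atTop (𝓝 0) := by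
    have h0 : Tendsto (fun n : ℕ => 1 + (N:ℝ)/n) atTop (𝓝 1) := by
      have h := tendsto_const_div_atTop_nhds_zero_nat (N:ℝ)
      simpa using tendsto_const_nhds.add h
    have h1 : Tendsto (fun n : ℕ => Real.log (1 + (N:ℝ)/n)) atTop (𝓝 0) := by
      have := ((Real.continuousAt_log one_ne_zero).tendsto).comp h0
      simpa [Function.comp_def] using this
    apply h1.congr'
    filter_upwards [eventually_ge_atTop 1] with n hn
    have hn0 : (0:ℝ) < n := by exact_mod_cast hn
    rw [show 1 + (N:ℝ)/n = ((n:ℝ) + N)/n by field_simp,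
      Real.log_div (by positivity) (by positivity)]
  have hEq : ∀ n : ℕ,
      (-(1/3) * Real.log (n:ℝ) + 2 / g^[n] (g^[N] x) - (n:ℝ))
        - (1/3) * (Real.log ((n:ℝ) + (N:ℝ)) - Real.log n) - (N:ℝ)
      = -(1/3) * Real.log (((n + N : ℕ)):ℝ) + 2 / g^[n + N] x - ((n + N : ℕ):ℝ) := by
    intro n
    rw [Function.iterate_add_apply]
    push_cast
    ring
  have hfinal : Tendsto (fun n : ℕ =>
      -(1/3) * Real.log (((n + N : ℕ)):ℝ) + 2 / g^[n + N] x - ((n + N : ℕ):ℝ)) atTop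
      (𝓝 (L' - (1/3) * 0 - (N:ℝ))) := by
    refine Tendsto.congr (fun n => hEq n) ?_
    exact (hL'.sub (hlogt.const_mul (1/3))).sub tendsto_const_nhds
  refine ⟨L' - (1/3) * 0 - (N:ℝ), ?_⟩
  exact (tendsto_add_atTop_iff_nat N).mp hfinal
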